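/- Let k be a field of characteristic zero and A a unital associative k-algebra. If K₁ ∈ L^{k₁}(A) and K₂ ∈ L^{k₂}(A) are skew-symmetric polyderivations of A, then their Nijenhuis–Richardson bracket [K₁,K₂]^∧ = i_{K₁}K₂ − (−1)^{k₁k₂} i_{K₂}K₁ ∈ Λ^{k₁+k₂+1}(A;A) is again a skew-symmetric polyderivation, i.e. [K₁,K₂]^∧ ∈ L^{k₁+k₂}(A). -/

import Mathlib

open Equiv

/-- The insertion operator: for `K ∈ Λ^{k1}(A;A)` (with `k1 = k+1 ≥ 1`) and
`Φ ∈ Λ^p(A;A)` (with `p ≥ 1`), the map `i_K Φ ∈ Λ^n(A;A)` with `n = k1 + p − 1`, given by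
`(i_K Φ)(a₁,…,aₙ) = (1/(k1! (p−1)!)) Σ_σ sign σ ·
Φ(K(a_{σ(1)},…,a_{σ(k1)}), a_{σ(k1+1)},…,a_{σ(n)})`, at the level of functions. -/
noncomputable def insertionFn (𝕜 : Type u) [Field 𝕜] (A : Type v) [Ring A] [Algebra 𝕜 A]
    {k1 p n : ℕ} (h1 : 1 ≤ k1) (h2 : 1 ≤ p) (hn : n + 1 = k1 + p)
    (K : (Fin k1 → A) → A) (Φ : (Fin p → A) → A) : (Fin n → A) → A :=
  fun v =>
    ((k1.factorial * (p - 1).factorial : 𝕜))⁻¹ •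
      ∑ σ : Equiv.Perm (Fin n), ((Equiv.Perm.sign σ : ℤˣ) : ℤ) •
        Φ (fun j : Fin p =>
          if _hj : (j : ℕ) = 0 then
            K (fun i : Fin k1 => v (σ ⟨(i : ℕ), by have := i.isLt; omega⟩))
          else v (σ ⟨k1 + (j : ℕ) - 1, by have := j.isLt; omega⟩))

/-- Insertion of an element `a ∈ A = Λ^0(A;A)` into `Φ ∈ Λ^{q+1}(A;A)`:
`(i_a Φ)(a₁,…,a_q) = Φ(a, a₁,…,a_q)`. -/
def insertion0Fn {A : Type v} [Ring A] {q : ℕ} (a : A) (Φ : (Fin (q + 1) → A) → A) :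
    (Fin q → A) → A :=
  fun v => Φ (Fin.cons a v)

/-- The wedge product of `φ ∈ Λ^p(A;A)` and `ψ ∈ Λ^q(A;A)`:
`(φ∧ψ)(a₁,…,a_{p+q}) = (1/(p! q!)) Σ_σ sign σ ·
φ(a_{σ(1)},…,a_{σ(p)}) · ψ(a_{σ(p+1)},…,a_{σ(p+q)})`, at the level of functions. -/
noncomputable def wedgeFn (𝕜 : Type u) [Field 𝕜] (A : Type v) [Ring A] [Algebra 𝕜 A]
    {p q n : ℕ} (hn : n = p + q)
    (φ : (Fin p → A) → A) (ψ : (Fin q → A) → A) : (Fin n → A) → A :=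
  fun v =>
    ((p.factorial * q.factorial : 𝕜))⁻¹ •
      ∑ σ : Equiv.Perm (Fin n), ((Equiv.Perm.sign σ : ℤˣ) : ℤ) •
        (φ (fun i : Fin p => v (σ ⟨(i : ℕ), by have := i.isLt; omega⟩)) *
          ψ (fun j : Fin q => v (σ ⟨p + (j : ℕ), by have := j.isLt; omega⟩)))

/-- `F ∈ Λ^{m+1}(A;A)` is a skew-symmetric polyderivation: for all `a₁, …, a_m ∈ A`
the map `a ↦ F(a, a₁, …, a_m)` is a derivation of `A`. -/
def IsPolyDerivation {A : Type v} [Ring A] {m : ℕ} (F : (Fin (m + 1) → A) → A) : Prop :=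
  ∀ (v : Fin m → A) (a b : A),
    F (Fin.cons (a * b) v) = F (Fin.cons a v) * b + a * F (Fin.cons b v)

/-- The Nijenhuis–Richardson bracket `[K,L]^∧ = i_K L − (−1)^{kl} i_L K` of
`K ∈ Λ^{k+1}(A;A)` and `L ∈ Λ^{l+1}(A;A)`, at the level of functions. -/
noncomputable def nrBracketFn (𝕜 : Type u) [Field 𝕜] (A : Type v) [Ring A] [Algebra 𝕜 A]
    {k l : ℕ} (K : (Fin (k + 1) → A) → A) (L : (Fin (l + 1) → A) → A) :
    (Fin (k + l + 1) → A) → A :=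
  insertionFn 𝕜 A (n := k + l + 1) (by omega) (by omega) (by omega) K L -
    ((-1 : ℤ) ^ (k * l)) •
      insertionFn 𝕜 A (n := k + l + 1) (by omega) (by omega) (by omega) L K

section NRaux

variable {𝕜 : Type u} [Field 𝕜] {A : Type v} [Ring A] [Algebra 𝕜 A]

lemma nr_update_eq_cons {m : ℕ} (w : Fin (m+1) → A) (z : A) :
    Function.update w 0 z = Fin.cons z (Fin.tail w) := by
  conv_lhs => rw [← Fin.cons_self_tail w]
  rw [Fin.update_cons_zero]

lemma nr_cons_of_ne_zero {m : ℕ} (x y : A) (v : Fin m → A) {i : Fin (m+1)} (h : i ≠ 0) :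
    (Fin.cons x v : Fin (m+1) → A) i = (Fin.cons y v : Fin (m+1) → A) i := by
  obtain ⟨j, rfl⟩ := Fin.exists_succ_eq.mpr h
  simp

lemma nr_deriv_update {m : ℕ} (F : A [⋀^Fin (m+1)]→ₗ[𝕜] A) (hF : IsPolyDerivation ⇑F)
    (w : Fin (m+1) → A) (i : Fin (m+1)) (x y : A) :
    F (Function.update w i (x*y))
      = F (Function.update w i x) * y + x * F (Function.update w i y) := by
  have h0 : ∀ (w : Fin (m+1) → A) (x y : A),
      F (Function.update w 0 (x*y))
        = F (Function.update w 0 x) * y + x * F (Function.update w 0 y) := by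
    intro w x y
    rw [nr_update_eq_cons, nr_update_eq_cons, nr_update_eq_cons]
    exact hF (Fin.tail w) x y
  rcases eq_or_ne i 0 with rfl | hi
  · exact h0 w x y
  · have hswap : ∀ z : A,
        Function.update w i z ∘ Equiv.swap 0 i
          = Function.update (w ∘ Equiv.swap 0 i) 0 z := by
      intro z; funext j
      simp only [Function.comp_apply]
      rcases eq_or_ne j 0 with rfl | hj
      · rw [Equiv.swap_apply_left, Function.update_self, Function.update_self]
      · rw [Function.update_of_ne hj]
        rcases eq_or_ne j i with rfl | hji
        · show _ = w (Equiv.swap 0 j j)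
          rw [Equiv.swap_apply_right, Function.update_of_ne (Ne.symm hi)]
        · show _ = w (Equiv.swap 0 i j)
          rw [Equiv.swap_apply_of_ne_of_ne hj hji, Function.update_of_ne hji]
    have key : ∀ z : A, F (Function.update w i z)
        = - F (Function.update (w ∘ Equiv.swap 0 i) 0 z) := by
      intro z
      have h := F.map_swap (Function.update w i z) (Ne.symm hi)
      rw [hswap z] at h
      rw [h, neg_neg]
    rw [key (x*y), key x, key y, h0]
    simp only [neg_add, neg_mul, mul_neg]

lemma nr_cons_mul_expand {l : ℕ} (L : A [⋀^Fin (l+1)]→ₗ[𝕜] A) (hL : IsPolyDerivation ⇑L)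
    (t : Fin l → A) (X Y : A) :
    L (Fin.cons (X * Y) t) = L (Fin.cons X t) * Y + X * L (Fin.cons Y t) :=
  hL t X Y

lemma nr_cons_add {l : ℕ} (L : A [⋀^Fin (l+1)]→ₗ[𝕜] A) (t : Fin l → A) (X Y : A) :
    L (Fin.cons (X + Y) t) = L (Fin.cons X t) + L (Fin.cons Y t) := by
  have h := L.map_update_add (Fin.cons (0:A) t) 0 X Y
  simpa [Fin.update_cons_zero] using h

end NRaux

section NRaux2

variable {A : Type v} [Ring A]

noncomputable def canonPair (k l n : ℕ) (hn : n = k + l)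
    (K : (Fin (k+1) → A) → A) (L : (Fin (l+1) → A) → A)
    (v : Fin n → A) (a b : A) : A :=
  ∑ ρ : Perm (Fin n), ((Equiv.Perm.sign ρ : ℤˣ) : ℤ) •
    (K (Fin.cons a fun i : Fin k => v (ρ ⟨(i:ℕ), by have := i.isLt; omega⟩)) *
       L (Fin.cons b fun j : Fin l => v (ρ ⟨k + (j:ℕ), by have := j.isLt; omega⟩)) +
     L (Fin.cons a fun j : Fin l => v (ρ ⟨k + (j:ℕ), by have := j.isLt; omega⟩)) *
       K (Fin.cons b fun i : Fin k => v (ρ ⟨(i:ℕ), by have := i.isLt; omega⟩)))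

lemma nr_finRotate_pow_val {m : ℕ} :
    ∀ (t : ℕ) (i : Fin (m+1)), ((((finRotate (m+1))^t) i : Fin (m+1)) : ℕ) = ((i:ℕ) + t) % (m+1) := by
  intro t
  induction t with
  | zero => intro i; simp [Nat.mod_eq_of_lt i.isLt]
  | succ t ih =>
    intro i
    rw [pow_succ, Equiv.Perm.mul_apply, ih, finRotate_succ_apply, Fin.val_add, Fin.val_one',
      Nat.add_mod_mod, Nat.mod_add_mod]
    congr 1
    omega

lemma nr_sign_pow_rotate (k₁ k₂ n : ℕ) (hn : n = k₁ + k₂) :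
    (((Equiv.Perm.sign ((finRotate n)^k₁)) : ℤˣ) : ℤ) = (-1 : ℤ)^(k₁ * k₂) := by
  rcases n with _ | m
  · have hk : k₁ = 0 := by omega
    subst hk
    simp
  · rw [map_pow, sign_finRotate]
    push_cast
    rw [← pow_mul]
    rw [neg_one_pow_eq_pow_mod_two, neg_one_pow_eq_pow_mod_two (n := k₁ * k₂)]
    congr 1
    have hm : m + 1 = k₁ + k₂ := hn
    rcases Nat.even_or_odd k₁ with he | ho
    · have h1 : Even (m * k₁) := he.mul_left m
      have h2 : Even (k₁ * k₂) := he.mul_right k₂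
      rw [Nat.even_iff.mp h1, Nat.even_iff.mp h2]
    · rcases Nat.even_or_odd k₂ with he2 | ho2
      · have hme : Even m := by
          obtain ⟨t, ht⟩ := ho
          obtain ⟨s, hs⟩ := he2
          exact ⟨t + s, by omega⟩
        have h1 : Even (m * k₁) := hme.mul_right k₁
        have h2 : Even (k₁ * k₂) := he2.mul_left k₁
        rw [Nat.even_iff.mp h1, Nat.even_iff.mp h2]
      · have hmo : Odd m := by
          obtain ⟨t, ht⟩ := ho
          obtain ⟨s, hs⟩ := ho2
          exact ⟨t + s, by omega⟩
        have h1 : Odd (m * k₁) := hmo.mul ho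
        have h2 : Odd (k₁ * k₂) := ho.mul ho2
        rw [Nat.odd_iff.mp h1, Nat.odd_iff.mp h2]

end NRaux2

section NRaux3

variable {A : Type v} [Ring A]

lemma canonPair_swap (k₁ k₂ n : ℕ) (hn₁ : n = k₁ + k₂) (hn₂ : n = k₂ + k₁)
    (K₁ : (Fin (k₁+1) → A) → A) (K₂ : (Fin (k₂+1) → A) → A)
    (v : Fin n → A) (a b : A) :
    canonPair k₂ k₁ n hn₂ K₂ K₁ v a b
      = ((-1 : ℤ)^(k₁ * k₂)) • canonPair k₁ k₂ n hn₁ K₁ K₂ v a b := by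
  unfold canonPair
  rcases n with _ | m
  · have hk1 : k₁ = 0 := by omega
    have hk2 : k₂ = 0 := by omega
    subst hk1; subst hk2
    have hcons : ∀ (x : A) (f : Fin 0 → A), (Fin.cons x f : Fin 1 → A) = fun _ => x := by
      intro x f; funext i
      have hi : i = 0 := by
        have := i.isLt
        apply Fin.ext
        omega
      rw [hi, Fin.cons_zero]
    simp only [hcons, Nat.mul_zero, pow_zero, one_smul]
    refine Finset.sum_congr rfl fun ρ _ => ?_
    rw [add_comm]
  · set β : Perm (Fin (m+1)) := (finRotate (m+1))^k₁ with hβ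
    rw [Finset.smul_sum]
    conv_lhs => rw [← Equiv.sum_comp (Equiv.mulRight β)]
    refine Finset.sum_congr rfl fun ρ _ => ?_
    simp only [Equiv.coe_mulRight]
    have hidx1 : (fun j : Fin k₂ => v ((ρ * β) ⟨(j:ℕ), by have := j.isLt; omega⟩))
        = (fun j : Fin k₂ => v (ρ ⟨k₁ + (j:ℕ), by have := j.isLt; omega⟩)) := by
      funext j
      congr 1
      rw [Equiv.Perm.mul_apply]
      congr 1
      apply Fin.ext
      rw [hβ, nr_finRotate_pow_val]
      simp only []
      have hlt : (j:ℕ) + k₁ < m + 1 := by have := j.isLt; omega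
      rw [Nat.mod_eq_of_lt hlt]
      omega
    have hidx2 : (fun i : Fin k₁ => v ((ρ * β) ⟨k₂ + (i:ℕ), by have := i.isLt; omega⟩))
        = (fun i : Fin k₁ => v (ρ ⟨(i:ℕ), by have := i.isLt; omega⟩)) := by
      funext i
      congr 1
      rw [Equiv.Perm.mul_apply]
      congr 1
      apply Fin.ext
      rw [hβ, nr_finRotate_pow_val]
      have h1 : k₂ + (i:ℕ) + k₁ = (m+1) + (i:ℕ) := by omega
      rw [h1, Nat.add_mod_left]
      show (i:ℕ) % (m+1) = (i:ℕ)
      exact Nat.mod_eq_of_lt (by have := i.isLt; omega)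
    rw [hidx1, hidx2]
    rw [map_mul]
    have hsgnβ : ((Equiv.Perm.sign β : ℤˣ) : ℤ) = (-1 : ℤ)^(k₁ * k₂) :=
      nr_sign_pow_rotate k₁ k₂ (m+1) hn₁
    rw [smul_smul]
    have : ((Equiv.Perm.sign ρ * Equiv.Perm.sign β : ℤˣ) : ℤ)
        = (-1 : ℤ)^(k₁ * k₂) * ((Equiv.Perm.sign ρ : ℤˣ) : ℤ) := by
      rw [Units.val_mul]; push_cast [hsgnβ]; ring
    rw [this]
    congr 1
    rw [add_comm]

end NRaux3
section NRcore

variable {𝕜 : Type u} [Field 𝕜] {A : Type v} [Ring A] [Algebra 𝕜 A]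

noncomputable def defectD (k l n : ℕ) (hn : n = k + l)
    (K : (Fin (k+1) → A) → A) (L : (Fin (l+1) → A) → A)
    (v : Fin n → A) (a b : A) (σ : Perm (Fin (n+1))) : A :=
  if hp : ((σ.symm 0 : Fin (n+1)) : ℕ) < k + 1 then
    K (Function.update
        (fun i : Fin (k+1) => (Fin.cons (0:A) v : Fin (n+1) → A) (σ ⟨(i:ℕ), by have := i.isLt; omega⟩))
        ⟨((σ.symm 0 : Fin (n+1)) : ℕ), hp⟩ a)
      * L (Fin.cons b (fun j : Fin l => (Fin.cons (0:A) v : Fin (n+1) → A) (σ ⟨k + 1 + (j:ℕ), by have := j.isLt; omega⟩)))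
    + L (Fin.cons a (fun j : Fin l => (Fin.cons (0:A) v : Fin (n+1) → A) (σ ⟨k + 1 + (j:ℕ), by have := j.isLt; omega⟩)))
      * K (Function.update
        (fun i : Fin (k+1) => (Fin.cons (0:A) v : Fin (n+1) → A) (σ ⟨(i:ℕ), by have := i.isLt; omega⟩))
        ⟨((σ.symm 0 : Fin (n+1)) : ℕ), hp⟩ b)
  else 0

def bigTerm (k l n : ℕ) (hn : n = k + l)
    (K : (Fin (k+1) → A) → A) (L : (Fin (l+1) → A) → A)
    (w : Fin (n+1) → A) (σ : Perm (Fin (n+1))) : A :=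
  L (fun j : Fin (l+1) =>
      if _hj : (j : ℕ) = 0 then
        K (fun i : Fin (k+1) => w (σ ⟨(i : ℕ), by have := i.isLt; omega⟩))
      else w (σ ⟨k + 1 + (j : ℕ) - 1, by have := j.isLt; omega⟩))

lemma insertionFn_eq (k l n : ℕ) (hn : n = k + l) (h1 : 1 ≤ k + 1) (h2 : 1 ≤ l + 1)
    (hN : (n + 1) + 1 = (k + 1) + (l + 1))
    (K : (Fin (k+1) → A) → A) (L : (Fin (l+1) → A) → A) :
    insertionFn 𝕜 A h1 h2 hN K L
      = fun w => (((k+1).factorial * ((l+1) - 1).factorial : 𝕜))⁻¹ •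
          ∑ σ : Perm (Fin (n+1)), ((Equiv.Perm.sign σ : ℤˣ) : ℤ) • bigTerm k l n hn K L w σ :=
  rfl

end NRcore

section PermDecomp

def permDecomp (m : ℕ) : Fin (m+1) × Perm (Fin m) ≃ Perm (Fin (m+1)) where
  toFun Pρ := Equiv.Perm.decomposeFin.symm (0, Pρ.2) * Equiv.swap 0 Pρ.1
  invFun σ := (σ.symm 0, (Equiv.Perm.decomposeFin (σ * Equiv.swap 0 (σ.symm 0))).2)
  left_inv := by
    rintro ⟨P, ρ⟩
    have hg0 : (Equiv.Perm.decomposeFin.symm (0, ρ)) 0 = 0 :=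
      Equiv.Perm.decomposeFin_symm_apply_zero 0 ρ
    have hsymm : (Equiv.Perm.decomposeFin.symm (0, ρ) * Equiv.swap 0 P).symm 0 = P := by
      rw [Equiv.symm_apply_eq]
      show (0 : Fin (m+1)) = Equiv.Perm.decomposeFin.symm (0, ρ) (Equiv.swap 0 P P)
      rw [Equiv.swap_apply_right, hg0]
    refine Prod.ext ?_ ?_
    · exact hsymm
    · show (Equiv.Perm.decomposeFin
        ((Equiv.Perm.decomposeFin.symm (0, ρ) * Equiv.swap 0 P) *
          Equiv.swap 0 ((Equiv.Perm.decomposeFin.symm (0, ρ) * Equiv.swap 0 P).symm 0))).2 = ρ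
      rw [hsymm, mul_assoc, Equiv.swap_mul_self, mul_one, Equiv.apply_symm_apply]
  right_inv := by
    intro σ
    have h1 : (σ * Equiv.swap 0 (σ.symm 0)) 0 = 0 := by
      rw [Equiv.Perm.mul_apply, Equiv.swap_apply_left, Equiv.apply_symm_apply]
    have h2 : (Equiv.Perm.decomposeFin (σ * Equiv.swap 0 (σ.symm 0))).1 = 0 := by
      have h3 := Equiv.Perm.decomposeFin_symm_apply_zero
        (Equiv.Perm.decomposeFin (σ * Equiv.swap 0 (σ.symm 0))).1
        (Equiv.Perm.decomposeFin (σ * Equiv.swap 0 (σ.symm 0))).2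
      rw [Prod.mk.eta, Equiv.symm_apply_apply] at h3
      rw [← h3, h1]
    show Equiv.Perm.decomposeFin.symm (0, (Equiv.Perm.decomposeFin (σ * Equiv.swap 0 (σ.symm 0))).2)
        * Equiv.swap 0 (σ.symm 0) = σ
    have h4 : Equiv.Perm.decomposeFin.symm
        (0, (Equiv.Perm.decomposeFin (σ * Equiv.swap 0 (σ.symm 0))).2)
        = σ * Equiv.swap 0 (σ.symm 0) := by
      conv_rhs => rw [← Equiv.symm_apply_apply Equiv.Perm.decomposeFin (σ * Equiv.swap 0 (σ.symm 0))]
      congr 1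
      exact Prod.ext h2.symm rfl
    rw [h4, mul_assoc, Equiv.swap_mul_self, mul_one]

lemma permDecomp_symm_zero (m : ℕ) (P : Fin (m+1)) (ρ : Perm (Fin m)) :
    ((permDecomp m) (P, ρ)).symm 0 = P := by
  have := (permDecomp m).left_inv (P, ρ)
  exact congrArg Prod.fst this

lemma permDecomp_sign (m : ℕ) (P : Fin (m+1)) (ρ : Perm (Fin m)) :
    Equiv.Perm.sign ((permDecomp m) (P, ρ)) = (if P = 0 then 1 else -1) * Equiv.Perm.sign ρ := by
  show Equiv.Perm.sign (Equiv.Perm.decomposeFin.symm (0, ρ) * Equiv.swap 0 P) = _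
  rw [map_mul, Equiv.Perm.decomposeFin.symm_sign, if_pos rfl, one_mul]
  rcases eq_or_ne P 0 with rfl | hP
  · rw [if_pos rfl, Equiv.swap_self]
    simp [mul_comm]
  · rw [if_neg hP, Equiv.Perm.sign_swap (Ne.symm hP)]
    rw [mul_comm]

lemma permDecomp_apply_P (m : ℕ) (P : Fin (m+1)) (ρ : Perm (Fin m)) :
    (permDecomp m) (P, ρ) P = 0 := by
  show (Equiv.Perm.decomposeFin.symm (0, ρ)) (Equiv.swap 0 P P) = 0
  rw [Equiv.swap_apply_right]
  exact Equiv.Perm.decomposeFin_symm_apply_zero 0 ρ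

lemma permDecomp_apply_succ_of_ne (m : ℕ) (P : Fin (m+1)) (ρ : Perm (Fin m)) (t : Fin m)
    (hP : t.succ ≠ P) : (permDecomp m) (P, ρ) t.succ = (ρ t).succ := by
  show (Equiv.Perm.decomposeFin.symm (0, ρ)) (Equiv.swap 0 P t.succ) = _
  rw [Equiv.swap_apply_of_ne_of_ne (Fin.succ_ne_zero t) hP,
    Equiv.Perm.decomposeFin_symm_apply_succ, Equiv.swap_self, Equiv.refl_apply]

lemma permDecomp_apply_zero (m : ℕ) (P : Fin (m+1)) (ρ : Perm (Fin m)) (Q : Fin m)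
    (hQ : Fin.succ Q = P) : (permDecomp m) (P, ρ) 0 = (ρ Q).succ := by
  show (Equiv.Perm.decomposeFin.symm (0, ρ)) (Equiv.swap 0 P 0) = _
  rw [Equiv.swap_apply_left, ← hQ, Equiv.Perm.decomposeFin_symm_apply_succ, Equiv.swap_self,
    Equiv.refl_apply]

end PermDecomp

section Expand

variable {𝕜 : Type u} [Field 𝕜] {A : Type v} [Ring A] [Algebra 𝕜 A]

lemma bigTerm_expand (k l n : ℕ) (hn : n = k + l)
    (K : A [⋀^Fin (k+1)]→ₗ[𝕜] A) (L : A [⋀^Fin (l+1)]→ₗ[𝕜] A)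
    (hK : IsPolyDerivation ⇑K) (hL : IsPolyDerivation ⇑L)
    (v : Fin n → A) (a b : A) (σ : Perm (Fin (n+1))) :
    bigTerm k l n hn ⇑K ⇑L (Fin.cons (a*b) v) σ
      = bigTerm k l n hn ⇑K ⇑L (Fin.cons a v) σ * b
        + a * bigTerm k l n hn ⇑K ⇑L (Fin.cons b v) σ
        + defectD k l n hn ⇑K ⇑L v a b σ := by
  unfold bigTerm defectD
  by_cases hp : ((σ.symm 0 : Fin (n+1)) : ℕ) < k + 1
  · rw [dif_pos hp]
    set W : Fin (k+1) → A :=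
      fun i => (Fin.cons (0:A) v : Fin (n+1) → A) (σ ⟨(i:ℕ), by have := i.isLt; omega⟩) with hW
    set T : Fin l → A :=
      fun j => (Fin.cons (0:A) v : Fin (n+1) → A) (σ ⟨k+1+(j:ℕ), by have := j.isLt; omega⟩) with hT
    set P : Fin (k+1) := ⟨((σ.symm 0 : Fin (n+1)) : ℕ), hp⟩ with hPdef
    have hargs : ∀ x : A,
        (fun j : Fin (l+1) =>
          if _hj : (j : ℕ) = 0 then
            ⇑K (fun i : Fin (k+1) =>
              (Fin.cons x v : Fin (n+1) → A) (σ ⟨(i : ℕ), by have := i.isLt; omega⟩))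
          else (Fin.cons x v : Fin (n+1) → A) (σ ⟨k + 1 + (j : ℕ) - 1, by have := j.isLt; omega⟩))
        = Fin.cons (K (Function.update W P x)) T := by
      intro x
      funext j
      induction j using Fin.cases with
      | zero =>
        simp only [Fin.cons_zero]
        rw [dif_pos (Fin.val_zero (l+1))]
        congr 1
        funext i
        by_cases hiP : i = P
        · rw [hiP, Function.update_self]
          have hidx : (⟨((P : Fin (k+1)) : ℕ), (by have := P.isLt; omega : ((P : Fin (k+1)) : ℕ) < n+1)⟩ : Fin (n+1))
              = σ.symm 0 := Fin.ext rfl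
          rw [hidx, Equiv.apply_symm_apply, Fin.cons_zero]
        · rw [Function.update_of_ne hiP, hW]
          have hne : σ ⟨(i:ℕ), (by have := i.isLt; omega : (i:ℕ) < n+1)⟩ ≠ 0 := by
            intro h
            apply hiP
            have h2 : (⟨(i:ℕ), (by have := i.isLt; omega : (i:ℕ) < n+1)⟩ : Fin (n+1))
                = σ.symm 0 := by
              rw [← Equiv.symm_apply_apply σ ⟨(i:ℕ), (by have := i.isLt; omega : (i:ℕ) < n+1)⟩, h]
            have h3 : (i:ℕ) = ((σ.symm 0 : Fin (n+1)) : ℕ) := by rw [← h2]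
            exact Fin.val_injective (show (i:ℕ) = ((P : Fin (k+1)) : ℕ) from h3)
          exact nr_cons_of_ne_zero x 0 v hne
      | succ j' =>
        simp only [Fin.cons_succ]
        rw [dif_neg (by simp [Fin.val_succ] : ¬ ((Fin.succ j' : Fin (l+1)) : ℕ) = 0)]
        have hidx : (⟨k + 1 + ((Fin.succ j' : Fin (l+1)) : ℕ) - 1,
            (by have := (Fin.succ j').isLt; omega : k + 1 + ((Fin.succ j' : Fin (l+1)) : ℕ) - 1 < n+1)⟩ : Fin (n+1))
            = ⟨k + 1 + (j' : ℕ), (by have := j'.isLt; omega : k + 1 + (j' : ℕ) < n+1)⟩ := by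
          apply Fin.ext
          simp only [Fin.val_succ]
          omega
        rw [hidx, hT]
        have hne : σ (⟨k + 1 + (j' : ℕ), (by have := j'.isLt; omega : k + 1 + (j' : ℕ) < n+1)⟩ : Fin (n+1)) ≠ 0 := by
          intro h
          have h2 : (⟨k + 1 + (j' : ℕ), (by have := j'.isLt; omega : k + 1 + (j' : ℕ) < n+1)⟩ : Fin (n+1))
              = σ.symm 0 := by
            rw [← Equiv.symm_apply_apply σ ⟨k + 1 + (j' : ℕ), (by have := j'.isLt; omega : k + 1 + (j' : ℕ) < n+1)⟩, h]
          have h3 : k + 1 + (j' : ℕ) = ((σ.symm 0 : Fin (n+1)) : ℕ) := by rw [← h2]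
          omega
        exact nr_cons_of_ne_zero x 0 v hne
    rw [hargs (a*b), hargs a, hargs b]
    rw [nr_deriv_update K hK W P a b]
    rw [nr_cons_add L T]
    rw [hL T (K (Function.update W P a)) b, hL T a (K (Function.update W P b))]
    abel
  · rw [dif_neg hp, add_zero]
    push_neg at hp
    have hplt : ((σ.symm 0 : Fin (n+1)) : ℕ) < n + 1 := (σ.symm 0).isLt
    have hl1 : ((σ.symm 0 : Fin (n+1)) : ℕ) - (k+1) < l := by omega
    set J : Fin l := ⟨((σ.symm 0 : Fin (n+1)) : ℕ) - (k+1), hl1⟩ with hJ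
    set Kval : A := K (fun i : Fin (k+1) =>
      (Fin.cons (0:A) v : Fin (n+1) → A) (σ ⟨(i:ℕ), by have := i.isLt; omega⟩)) with hKval
    set T : Fin l → A :=
      fun j => (Fin.cons (0:A) v : Fin (n+1) → A) (σ ⟨k+1+(j:ℕ), by have := j.isLt; omega⟩) with hT
    have hargs : ∀ x : A,
        (fun j : Fin (l+1) =>
          if _hj : (j : ℕ) = 0 then
            ⇑K (fun i : Fin (k+1) =>
              (Fin.cons x v : Fin (n+1) → A) (σ ⟨(i : ℕ), by have := i.isLt; omega⟩))
          else (Fin.cons x v : Fin (n+1) → A) (σ ⟨k + 1 + (j : ℕ) - 1, by have := j.isLt; omega⟩))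
        = Function.update (Fin.cons Kval T) J.succ x := by
      intro x
      funext j
      induction j using Fin.cases with
      | zero =>
        rw [Function.update_of_ne (Fin.succ_ne_zero J).symm, Fin.cons_zero]
        rw [dif_pos (Fin.val_zero (l+1)), hKval]
        congr 1
        funext i
        have hne : σ (⟨(i:ℕ), (by have := i.isLt; omega : (i:ℕ) < n+1)⟩ : Fin (n+1)) ≠ 0 := by
          intro h
          have h2 : (⟨(i:ℕ), (by have := i.isLt; omega : (i:ℕ) < n+1)⟩ : Fin (n+1))
              = σ.symm 0 := by
            rw [← Equiv.symm_apply_apply σ ⟨(i:ℕ), (by have := i.isLt; omega : (i:ℕ) < n+1)⟩, h]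
          have h3 : (i:ℕ) = ((σ.symm 0 : Fin (n+1)) : ℕ) := by rw [← h2]
          have := i.isLt
          omega
        exact nr_cons_of_ne_zero x 0 v hne
      | succ j' =>
        rw [dif_neg (by simp [Fin.val_succ] : ¬ ((Fin.succ j' : Fin (l+1)) : ℕ) = 0)]
        have hidx : (⟨k + 1 + ((Fin.succ j' : Fin (l+1)) : ℕ) - 1,
            (by have := (Fin.succ j').isLt; omega : k + 1 + ((Fin.succ j' : Fin (l+1)) : ℕ) - 1 < n+1)⟩ : Fin (n+1))
            = ⟨k + 1 + (j' : ℕ), (by have := j'.isLt; omega : k + 1 + (j' : ℕ) < n+1)⟩ := by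
          apply Fin.ext
          simp only [Fin.val_succ]
          omega
        rw [hidx]
        by_cases hjJ : j' = J
        · rw [hjJ, Function.update_self]
          have h2 : (⟨k + 1 + ((J : Fin l) : ℕ), (by have := (J : Fin l).isLt; omega : k + 1 + ((J : Fin l) : ℕ) < n+1)⟩ : Fin (n+1))
              = σ.symm 0 := by
            apply Fin.ext
            show k + 1 + (((σ.symm 0 : Fin (n+1)) : ℕ) - (k+1)) = ((σ.symm 0 : Fin (n+1)) : ℕ)
            omega
          rw [h2, Equiv.apply_symm_apply, Fin.cons_zero]
        · rw [Function.update_of_ne (fun hc => hjJ (Fin.succ_injective l hc)), Fin.cons_succ, hT]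
          have hne : σ (⟨k + 1 + (j' : ℕ), (by have := j'.isLt; omega : k + 1 + (j' : ℕ) < n+1)⟩ : Fin (n+1)) ≠ 0 := by
            intro h
            apply hjJ
            have h2 : (⟨k + 1 + (j' : ℕ), (by have := j'.isLt; omega : k + 1 + (j' : ℕ) < n+1)⟩ : Fin (n+1))
                = σ.symm 0 := by
              rw [← Equiv.symm_apply_apply σ ⟨k + 1 + (j' : ℕ), (by have := j'.isLt; omega : k + 1 + (j' : ℕ) < n+1)⟩, h]
            have h3 : k + 1 + (j' : ℕ) = ((σ.symm 0 : Fin (n+1)) : ℕ) := by rw [← h2]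
            apply Fin.ext
            show (j' : ℕ) = ((σ.symm 0 : Fin (n+1)) : ℕ) - (k+1)
            omega
          exact nr_cons_of_ne_zero x 0 v hne
    rw [hargs (a*b), hargs a, hargs b]
    exact nr_deriv_update L hL (Fin.cons Kval T) J.succ a b

end Expand

section SumDefect

variable {𝕜 : Type u} [Field 𝕜] {A : Type v} [Ring A] [Algebra 𝕜 A]

lemma defect_inner (k l n : ℕ) (hn : n = k + l)
    (K : A [⋀^Fin (k+1)]→ₗ[𝕜] A) (L : A [⋀^Fin (l+1)]→ₗ[𝕜] A)
    (v : Fin n → A) (a b : A) (P : Fin (n+1)) (hP : (P : ℕ) < k + 1) (ρ : Perm (Fin n)) :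
    ((Equiv.Perm.sign (permDecomp n (P, ρ)) : ℤˣ) : ℤ) •
        defectD k l n hn ⇑K ⇑L v a b (permDecomp n (P, ρ))
      = ((Equiv.Perm.sign ρ : ℤˣ) : ℤ) •
        (K (Fin.cons a fun i : Fin k => v (ρ ⟨(i:ℕ), by have := i.isLt; omega⟩)) *
           L (Fin.cons b fun j : Fin l => v (ρ ⟨k + (j:ℕ), by have := j.isLt; omega⟩)) +
         L (Fin.cons a fun j : Fin l => v (ρ ⟨k + (j:ℕ), by have := j.isLt; omega⟩)) *
           K (Fin.cons b fun i : Fin k => v (ρ ⟨(i:ℕ), by have := i.isLt; omega⟩))) := by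
  set σ : Perm (Fin (n+1)) := permDecomp n (P, ρ) with hσ
  have hsymm : σ.symm 0 = P := permDecomp_symm_zero n P ρ
  have hs : ((σ.symm 0 : Fin (n+1)) : ℕ) < k + 1 := by rw [hsymm]; exact hP
  have hsval : ((σ.symm 0 : Fin (n+1)) : ℕ) = (P : ℕ) := congrArg Fin.val hsymm
  -- tail values
  have hTval : (fun j : Fin l =>
        (Fin.cons (0:A) v : Fin (n+1) → A) (σ ⟨k + 1 + (j:ℕ), by have := j.isLt; omega⟩))
      = (fun j : Fin l => v (ρ ⟨k + (j:ℕ), by have := j.isLt; omega⟩)) := by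
    funext j
    have hidx : (⟨k + 1 + (j:ℕ), (by have := j.isLt; omega : k + 1 + (j:ℕ) < n+1)⟩ : Fin (n+1))
        = Fin.succ ⟨k + (j:ℕ), (by have := j.isLt; omega : k + (j:ℕ) < n)⟩ := by
      apply Fin.ext
      simp only [Fin.val_succ, Fin.val_mk]
      omega
    rw [hidx, permDecomp_apply_succ_of_ne n P ρ _ (by
      intro h
      have h3 := congrArg Fin.val h
      simp only [Fin.val_succ, Fin.val_mk] at h3
      omega), Fin.cons_succ]
  -- update values
  have hupd : ∀ x : A,
      K (Function.update
          (fun i : Fin (k+1) =>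
            (Fin.cons (0:A) v : Fin (n+1) → A) (σ ⟨(i:ℕ), by have := i.isLt; omega⟩))
          ⟨((σ.symm 0 : Fin (n+1)) : ℕ), hs⟩ x)
        = (if P = 0 then (1:ℤ) else -1) •
            K (Fin.cons x fun i : Fin k => v (ρ ⟨(i:ℕ), by have := i.isLt; omega⟩)) := by
    intro x
    have hPK : (⟨((σ.symm 0 : Fin (n+1)) : ℕ), hs⟩ : Fin (k+1)) = ⟨(P:ℕ), hP⟩ := by
      apply Fin.ext
      simp only [Fin.val_mk]
      exact hsval
    rw [hPK]
    have hcomp : Function.update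
          (fun i : Fin (k+1) =>
            (Fin.cons (0:A) v : Fin (n+1) → A) (σ ⟨(i:ℕ), by have := i.isLt; omega⟩))
          ⟨(P:ℕ), hP⟩ x ∘ Equiv.swap 0 ⟨(P:ℕ), hP⟩
        = Fin.cons x (fun i : Fin k => v (ρ ⟨(i:ℕ), by have := i.isLt; omega⟩)) := by
      funext i
      simp only [Function.comp_apply]
      induction i using Fin.cases with
      | zero =>
        rw [Equiv.swap_apply_left, Function.update_self, Fin.cons_zero]
      | succ i' =>
        by_cases hiP : Fin.succ i' = (⟨(P:ℕ), hP⟩ : Fin (k+1))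
        · have hPval : (P:ℕ) = (i':ℕ) + 1 := by
            have h4 := congrArg Fin.val hiP
            simp only [Fin.val_succ, Fin.val_mk] at h4
            omega
          have hswapv : Equiv.swap (0 : Fin (k+1)) ⟨(P:ℕ), hP⟩ (Fin.succ i') = 0 := by
            rw [hiP, Equiv.swap_apply_right]
          rw [hswapv, Function.update_of_ne (by
              intro h0
              have h5 := congrArg Fin.val h0
              simp only [Fin.val_zero, Fin.val_mk] at h5
              omega)]
          have hidx0 : (⟨((0 : Fin (k+1)) : ℕ), (by have := (0 : Fin (k+1)).isLt; omega : ((0 : Fin (k+1)) : ℕ) < n+1)⟩ : Fin (n+1))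
              = (0 : Fin (n+1)) := by
            apply Fin.ext
            simp only [Fin.val_mk, Fin.val_zero]
          rw [hidx0]
          have hQ : Fin.succ (⟨(i':ℕ), (by have := i'.isLt; omega : (i':ℕ) < n)⟩ : Fin n) = P := by
            apply Fin.ext
            simp only [Fin.val_succ, Fin.val_mk]
            omega
          rw [permDecomp_apply_zero n P ρ _ hQ, Fin.cons_succ, Fin.cons_succ]
        · have hswapv : Equiv.swap (0 : Fin (k+1)) ⟨(P:ℕ), hP⟩ (Fin.succ i') = Fin.succ i' :=
            Equiv.swap_apply_of_ne_of_ne (Fin.succ_ne_zero i') hiP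
          rw [hswapv, Function.update_of_ne hiP]
          have hidx : (⟨((Fin.succ i' : Fin (k+1)) : ℕ), (by have := (Fin.succ i').isLt; omega : ((Fin.succ i' : Fin (k+1)) : ℕ) < n+1)⟩ : Fin (n+1))
              = Fin.succ ⟨(i':ℕ), (by have := i'.isLt; omega : (i':ℕ) < n)⟩ := by
            apply Fin.ext
            simp only [Fin.val_succ, Fin.val_mk]
          rw [hidx, permDecomp_apply_succ_of_ne n P ρ _ (by
            intro h
            apply hiP
            apply Fin.val_injective
            have h3 := congrArg Fin.val h
            simp only [Fin.val_succ, Fin.val_mk] at h3 ⊢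
            omega), Fin.cons_succ, Fin.cons_succ]
    rcases eq_or_ne P 0 with hP0 | hP0
    · rw [if_pos hP0, one_smul]
      have hswap0 : (⟨(P:ℕ), hP⟩ : Fin (k+1)) = 0 := by
        apply Fin.ext
        simp only [Fin.val_mk, Fin.val_zero, hP0]
      have hc0 : Function.update
          (fun i : Fin (k+1) =>
            (Fin.cons (0:A) v : Fin (n+1) → A) (σ ⟨(i:ℕ), by have := i.isLt; omega⟩))
          ⟨(P:ℕ), hP⟩ x ∘ Equiv.swap 0 ⟨(P:ℕ), hP⟩
          = Function.update
          (fun i : Fin (k+1) =>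
            (Fin.cons (0:A) v : Fin (n+1) → A) (σ ⟨(i:ℕ), by have := i.isLt; omega⟩))
          ⟨(P:ℕ), hP⟩ x := by
        rw [hswap0, Equiv.swap_self]
        rfl
      rw [← hc0, hcomp]
    · rw [if_neg hP0]
      have hne : (0 : Fin (k+1)) ≠ ⟨(P:ℕ), hP⟩ := by
        intro h0
        apply hP0
        have h5 := congrArg Fin.val h0
        simp only [Fin.val_zero, Fin.val_mk] at h5
        apply Fin.ext
        simp only [Fin.val_zero]
        omega
      have h5 := K.map_swap (Function.update
          (fun i : Fin (k+1) =>
            (Fin.cons (0:A) v : Fin (n+1) → A) (σ ⟨(i:ℕ), by have := i.isLt; omega⟩))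
          ⟨(P:ℕ), hP⟩ x) hne
      rw [hcomp] at h5
      rw [neg_one_zsmul, h5, neg_neg]
  -- combine
  have hsgn : ((Equiv.Perm.sign σ : ℤˣ) : ℤ)
      = (if P = 0 then (1:ℤ) else -1) * ((Equiv.Perm.sign ρ : ℤˣ) : ℤ) := by
    rw [hσ, permDecomp_sign]
    rcases eq_or_ne P 0 with h | h
    · simp [h]
    · simp [h]
  unfold defectD
  rw [dif_pos hs, hTval, hupd a, hupd b, hsgn]
  rw [smul_mul_assoc, mul_smul_comm, ← smul_add, smul_smul]
  congr 1
  rcases eq_or_ne P 0 with h | h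
  · simp [h]
  · simp [h]

end SumDefect

section SumDefect2

variable {𝕜 : Type u} [Field 𝕜] [CharZero 𝕜] {A : Type v} [Ring A] [Algebra 𝕜 A]

lemma sum_defectD (k l n : ℕ) (hn : n = k + l)
    (K : A [⋀^Fin (k+1)]→ₗ[𝕜] A) (L : A [⋀^Fin (l+1)]→ₗ[𝕜] A)
    (v : Fin n → A) (a b : A) :
    ∑ σ : Perm (Fin (n+1)), ((Equiv.Perm.sign σ : ℤˣ) : ℤ) • defectD k l n hn ⇑K ⇑L v a b σ
      = (k+1) • canonPair k l n hn ⇑K ⇑L v a b := by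
  conv_lhs => rw [← Equiv.sum_comp (permDecomp n)
      (fun σ => ((Equiv.Perm.sign σ : ℤˣ) : ℤ) • defectD k l n hn ⇑K ⇑L v a b σ)]
  rw [Fintype.sum_prod_type]
  have hinner : ∀ P : Fin (n+1),
      (∑ ρ : Perm (Fin n), ((Equiv.Perm.sign (permDecomp n (P, ρ)) : ℤˣ) : ℤ) •
        defectD k l n hn ⇑K ⇑L v a b (permDecomp n (P, ρ)))
      = if (P:ℕ) < k + 1 then canonPair k l n hn ⇑K ⇑L v a b else 0 := by
    intro P
    by_cases hP : (P:ℕ) < k + 1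
    · rw [if_pos hP]
      unfold canonPair
      exact Finset.sum_congr rfl fun ρ _ => defect_inner k l n hn K L v a b P hP ρ
    · rw [if_neg hP]
      refine Finset.sum_eq_zero fun ρ _ => ?_
      have h0 : defectD k l n hn ⇑K ⇑L v a b (permDecomp n (P, ρ)) = 0 := by
        unfold defectD
        rw [dif_neg (by rw [permDecomp_symm_zero n P ρ]; exact hP)]
      rw [h0, smul_zero]
  rw [Finset.sum_congr rfl fun P _ => hinner P]
  rw [Fin.sum_univ_eq_sum_range
    (fun i => if i < k + 1 then canonPair k l n hn ⇑K ⇑L v a b else 0) (n+1)]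
  rw [← Finset.sum_filter]
  have hfil : (Finset.range (n+1)).filter (fun i => i < k + 1) = Finset.range (k+1) := by
    ext i
    simp only [Finset.mem_filter, Finset.mem_range]
    omega
  rw [hfil, Finset.sum_const, Finset.card_range]

lemma insertionFn_apply (k l n : ℕ) (hn : n = k + l) (h1 : 1 ≤ k + 1) (h2 : 1 ≤ l + 1)
    (hN : (n + 1) + 1 = (k + 1) + (l + 1))
    (K : (Fin (k+1) → A) → A) (L : (Fin (l+1) → A) → A) (w : Fin (n+1) → A) :
    insertionFn 𝕜 A h1 h2 hN K L w
      = (((k+1).factorial * ((l+1) - 1).factorial : 𝕜))⁻¹ •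
          ∑ σ : Perm (Fin (n+1)), ((Equiv.Perm.sign σ : ℤˣ) : ℤ) • bigTerm k l n hn K L w σ :=
  rfl

lemma insertion_defect (k l n : ℕ) (hn : n = k + l) (h1 : 1 ≤ k + 1) (h2 : 1 ≤ l + 1)
    (hN : (n + 1) + 1 = (k + 1) + (l + 1))
    (K : A [⋀^Fin (k+1)]→ₗ[𝕜] A) (L : A [⋀^Fin (l+1)]→ₗ[𝕜] A)
    (hK : IsPolyDerivation ⇑K) (hL : IsPolyDerivation ⇑L)
    (v : Fin n → A) (a b : A) :
    insertionFn 𝕜 A h1 h2 hN ⇑K ⇑L (Fin.cons (a*b) v)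
      = insertionFn 𝕜 A h1 h2 hN ⇑K ⇑L (Fin.cons a v) * b
        + a * insertionFn 𝕜 A h1 h2 hN ⇑K ⇑L (Fin.cons b v)
        + ((k.factorial * l.factorial : 𝕜))⁻¹ • canonPair k l n hn ⇑K ⇑L v a b := by
  rw [insertionFn_apply k l n hn h1 h2 hN ⇑K ⇑L (Fin.cons (a*b) v),
    insertionFn_apply k l n hn h1 h2 hN ⇑K ⇑L (Fin.cons a v),
    insertionFn_apply k l n hn h1 h2 hN ⇑K ⇑L (Fin.cons b v)]
  have hsum : ∑ σ : Perm (Fin (n+1)), ((Equiv.Perm.sign σ : ℤˣ) : ℤ) •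
        bigTerm k l n hn ⇑K ⇑L (Fin.cons (a*b) v) σ
      = (∑ σ : Perm (Fin (n+1)), ((Equiv.Perm.sign σ : ℤˣ) : ℤ) •
          bigTerm k l n hn ⇑K ⇑L (Fin.cons a v) σ) * b
        + a * (∑ σ : Perm (Fin (n+1)), ((Equiv.Perm.sign σ : ℤˣ) : ℤ) •
          bigTerm k l n hn ⇑K ⇑L (Fin.cons b v) σ)
        + ∑ σ : Perm (Fin (n+1)), ((Equiv.Perm.sign σ : ℤˣ) : ℤ) •
          defectD k l n hn ⇑K ⇑L v a b σ := by
    rw [Finset.sum_mul, Finset.mul_sum, ← Finset.sum_add_distrib, ← Finset.sum_add_distrib]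
    refine Finset.sum_congr rfl fun σ _ => ?_
    rw [bigTerm_expand k l n hn K L hK hL v a b σ]
    rw [smul_add, smul_add, smul_mul_assoc, mul_smul_comm]
  rw [hsum, sum_defectD k l n hn K L v a b]
  rw [smul_add, smul_add, ← smul_mul_assoc, ← mul_smul_comm]
  congr 1
  rw [← Nat.cast_smul_eq_nsmul 𝕜 (k+1) (canonPair k l n hn ⇑K ⇑L v a b), smul_smul]
  congr 1
  simp only [Nat.add_sub_cancel]
  rw [Nat.factorial_succ]
  have hk : ((k+1 : ℕ) : 𝕜) ≠ 0 := Nat.cast_ne_zero.mpr (Nat.succ_ne_zero k)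
  have hf1 : ((k.factorial : ℕ) : 𝕜) ≠ 0 := Nat.cast_ne_zero.mpr k.factorial_ne_zero
  have hf2 : ((l.factorial : ℕ) : 𝕜) ≠ 0 := Nat.cast_ne_zero.mpr l.factorial_ne_zero
  push_cast
  field_simp

end SumDefect2

/-- If `K₁ ∈ L^{k₁}(A)` and `K₂ ∈ L^{k₂}(A)` are skew-symmetric polyderivations of `A`
(over a field of characteristic zero), then their Nijenhuis–Richardson bracket
`[K₁,K₂]^∧ ∈ Λ^{k₁+k₂+1}(A;A)` is again a skew-symmetric polyderivation:
`[K₁,K₂]^∧ ∈ L^{k₁+k₂}(A)`. -/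
theorem nrBracket_isPolyDerivation (𝕜 : Type u) [Field 𝕜] [CharZero 𝕜]
    (A : Type v) [Ring A] [Algebra 𝕜 A] (k₁ k₂ : ℕ)
    (K₁ : A [⋀^Fin (k₁ + 1)]→ₗ[𝕜] A) (K₂ : A [⋀^Fin (k₂ + 1)]→ₗ[𝕜] A)
    (h₁ : IsPolyDerivation ⇑K₁) (h₂ : IsPolyDerivation ⇑K₂) :
    IsPolyDerivation (nrBracketFn 𝕜 A ⇑K₁ ⇑K₂) := by
  unfold IsPolyDerivation nrBracketFn
  intro v a b
  simp only [Pi.sub_apply, Pi.smul_apply]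
  rw [insertion_defect k₁ k₂ (k₁+k₂) rfl (by omega) (by omega) (by omega) K₁ K₂ h₁ h₂ v a b]
  rw [insertion_defect k₂ k₁ (k₁+k₂) (by omega) (by omega) (by omega) (by omega) K₂ K₁ h₂ h₁ v a b]
  rw [canonPair_swap k₁ k₂ (k₁+k₂) rfl (by omega) ⇑K₁ ⇑K₂ v a b]
  have hone : ((((-1:ℤ)^(k₁*k₂) : ℤ) : 𝕜)) * ((((-1:ℤ)^(k₁*k₂) : ℤ) : 𝕜)) = 1 := by
    rw [← Int.cast_mul, ← pow_add]
    rw [Even.neg_one_pow ⟨k₁*k₂, rfl⟩]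
    exact Int.cast_one
  have hkey : ((-1:ℤ)^(k₁*k₂)) • (((k₂.factorial * k₁.factorial : 𝕜))⁻¹ •
        (((-1:ℤ)^(k₁*k₂)) • canonPair k₁ k₂ (k₁+k₂) rfl ⇑K₁ ⇑K₂ v a b))
      = ((k₁.factorial * k₂.factorial : 𝕜))⁻¹ • canonPair k₁ k₂ (k₁+k₂) rfl ⇑K₁ ⇑K₂ v a b := by
    rw [← Int.cast_smul_eq_zsmul 𝕜 ((-1:ℤ)^(k₁*k₂)) (canonPair k₁ k₂ (k₁+k₂) rfl ⇑K₁ ⇑K₂ v a b)]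
    rw [smul_smul]
    rw [← Int.cast_smul_eq_zsmul 𝕜 ((-1:ℤ)^(k₁*k₂))
      ((((k₂.factorial * k₁.factorial : 𝕜))⁻¹ * (((-1:ℤ)^(k₁*k₂) : ℤ) : 𝕜)) • canonPair k₁ k₂ (k₁+k₂) rfl ⇑K₁ ⇑K₂ v a b)]
    rw [smul_smul]
    congr 1
    rw [mul_comm ((k₂.factorial : 𝕜) * (k₁.factorial : 𝕜))⁻¹]
    rw [← mul_assoc, hone, one_mul, mul_comm (k₂.factorial : 𝕜)]
  rw [smul_add, smul_add, hkey]
  rw [sub_mul, mul_sub, smul_mul_assoc ((-1:ℤ)^(k₁*k₂)), mul_smul_comm ((-1:ℤ)^(k₁*k₂))]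
  abel
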